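/- Let m, n ≥ 4. (i) For any non-returning languages L' of state complexity m over Σ' and L of state complexity n over Σ, the union L' ∪ L and symmetric difference L' ⊕ L, regarded as languages over Σ' ∪ Σ, have state complexity at most mn + 1; this bound is attained: κ(L'_m(a,b,c) ∪ L_n(b,a,d)) = κ(L'_m(a,b,c) ⊕ L_n(b,a,d)) = mn + 1, where L'_m(a,b,c) ⊆ {a,b,c}* and L_n(b,a,d) ⊆ {a,b,d}* (in L_n(b,a,d) the roles of a and b are exchanged and d is as in D_n), the operations taken over {a,b,c,d}. (ii) κ(L'_m(a,b,c) \ L_n(b,a)) = mn - n + 1, the difference taken over {a,b,c}. (iii) κ(L'_m(a,b) ∩ L_n(b,a)) = mn - (m + n - 2). -/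

import Mathlib

/-- Left quotient of a language by a word. -/
def leftQuot {γ : Type} (L : Set (List γ)) (w : List γ) : Set (List γ) := {x | w ++ x ∈ L}

/-- The set of left quotients of `L` by words over the alphabet `A`. -/
def quotientsOn {γ : Type} (A : Set γ) (L : Set (List γ)) : Set (Set (List γ)) :=
  {K | ∃ w : List γ, (∀ x ∈ w, x ∈ A) ∧ K = leftQuot L w}

/-- `L` is non-returning over the alphabet `A`: no quotient by a nonempty word
over `A` equals `L`. -/
def NonReturningOn {γ : Type} (A : Set γ) (L : Set (List γ)) : Prop :=
  ∀ w : List γ, w ≠ [] → (∀ x ∈ w, x ∈ A) → leftQuot L w ≠ L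

/-- The four-letter alphabet `{a,b,c,d}`. -/
inductive ABCD : Type
  | a | b | c | d
  deriving DecidableEq

/-- Transitions of `D'_m(a,b,c)` (the letter `d` is not in its alphabet; words are
restricted to `{a,b,c}`): `a : (1,…,m-1)(0→1)`, `b : (1,2)(0→2)`,
`c : (2,…,m-1)(1→2)(0→1)`. -/
def stepM (m : ℕ) (q : ℕ) : ABCD → ℕ
  | ABCD.a => if q = m - 1 then 1 else q + 1
  | ABCD.b => if q = 0 then 2 else if q = 1 then 2 else if q = 2 then 1 else q
  | ABCD.c => if q = m - 1 then 2 else q + 1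
  | ABCD.d => q

/-- The language `L'_m(a,b,c) ⊆ {a,b,c}*`. -/
def LmABC (m : ℕ) : Set (List ABCD) :=
  {w | (∀ x ∈ w, x ≠ ABCD.d) ∧ w ∈ (DFA.mk (stepM m) 0 {m - 1} : DFA ABCD ℕ).accepts}

/-- Transitions of the dialect `D_n(b,a,d)`: the roles of `a` and `b` are exchanged
(`b : (1,…,n-1)(0→1)`, `a : (1,2)(0→2)`) and `d : (0→2)`; the letter `c` is not in its
alphabet (words are restricted to `{a,b,d}`). -/
def stepBAD (n : ℕ) (q : ℕ) : ABCD → ℕ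
  | ABCD.b => if q = n - 1 then 1 else q + 1
  | ABCD.a => if q = 0 then 2 else if q = 1 then 2 else if q = 2 then 1 else q
  | ABCD.d => if q = 0 then 2 else q
  | ABCD.c => q

/-- The language `L_n(b,a,d) ⊆ {a,b,d}*`. -/
def LnBAD (n : ℕ) : Set (List ABCD) :=
  {w | (∀ x ∈ w, x ≠ ABCD.c) ∧ w ∈ (DFA.mk (stepBAD n) 0 {n - 1} : DFA ABCD ℕ).accepts}

/-- The language `L_n(b,a) ⊆ {a,b}*` (roles of `a` and `b` exchanged). -/
def LnBA (n : ℕ) : Set (List ABCD) :=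
  {w | (∀ x ∈ w, x ≠ ABCD.c ∧ x ≠ ABCD.d) ∧
    w ∈ (DFA.mk (stepBAD n) 0 {n - 1} : DFA ABCD ℕ).accepts}

/-- The language `L'_m(a,b) ⊆ {a,b}*`. -/
def LmAB (m : ℕ) : Set (List ABCD) :=
  {w | (∀ x ∈ w, x ≠ ABCD.c ∧ x ≠ ABCD.d) ∧
    w ∈ (DFA.mk (stepM m) 0 {m - 1} : DFA ABCD ℕ).accepts}
namespace S19
open ABCD

abbrev Wd := List ABCD

def evM (m p : ℕ) (w : Wd) : ℕ := w.foldl (stepM m) p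
def evN (n q : ℕ) (w : Wd) : ℕ := w.foldl (stepBAD n) q

theorem evM_nil (m p : ℕ) : evM m p [] = p := rfl
theorem evM_cons (m p : ℕ) (x w) : evM m p (x :: w) = evM m (stepM m p x) w := rfl
theorem evM_append (m p : ℕ) (u v) : evM m p (u ++ v) = evM m (evM m p u) v :=
  List.foldl_append
theorem evN_nil (n q : ℕ) : evN n q [] = q := rfl
theorem evN_cons (n q : ℕ) (x w) : evN n q (x :: w) = evN n (stepBAD n q x) w := rfl
theorem evN_append (n q : ℕ) (u v) : evN n q (u ++ v) = evN n (evN n q u) v :=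
  List.foldl_append

theorem mem_LmABC {m w} : w ∈ LmABC m ↔ (∀ x ∈ w, x ≠ d) ∧ evM m 0 w = m - 1 := Iff.rfl
theorem mem_LnBAD {n w} : w ∈ LnBAD n ↔ (∀ x ∈ w, x ≠ c) ∧ evN n 0 w = n - 1 := Iff.rfl
theorem mem_LnBA {n w} : w ∈ LnBA n ↔ (∀ x ∈ w, x ≠ c ∧ x ≠ d) ∧ evN n 0 w = n - 1 := Iff.rfl
theorem mem_LmAB {m w} : w ∈ LmAB m ↔ (∀ x ∈ w, x ≠ c ∧ x ≠ d) ∧ evM m 0 w = m - 1 := Iff.rfl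

/-- `rep x k` = the word `x^k`. -/
abbrev rep (x : ABCD) (k : ℕ) : Wd := List.replicate k x

theorem rep_succ (x k) : rep x (k+1) = x :: rep x k := rfl

end S19
namespace S19
open ABCD

/-! ### step computations -/

theorem stepM_a (m p) : stepM m p a = if p = m - 1 then 1 else p + 1 := rfl
theorem stepM_b (m p) : stepM m p b = if p = 0 then 2 else if p = 1 then 2 else if p = 2 then 1 else p := rfl
theorem stepM_c (m p) : stepM m p c = if p = m - 1 then 2 else p + 1 := rfl
theorem stepM_d (m p) : stepM m p d = p := rfl
theorem stepN_b (n q) : stepBAD n q b = if q = n - 1 then 1 else q + 1 := rfl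
theorem stepN_a (n q) : stepBAD n q a = if q = 0 then 2 else if q = 1 then 2 else if q = 2 then 1 else q := rfl
theorem stepN_d (n q) : stepBAD n q d = if q = 0 then 2 else q := rfl
theorem stepN_c (n q) : stepBAD n q c = q := rfl

/-! ### invariants -/

theorem stepM_le {m p} (hm : 4 ≤ m) (hp : p ≤ m - 1) (x) : stepM m p x ≤ m - 1 := by
  cases x <;> simp only [stepM] <;> first | omega | (split_ifs <;> omega)

theorem evM_le {m} (hm : 4 ≤ m) {p} (hp : p ≤ m - 1) (w) : evM m p w ≤ m - 1 := by
  induction w generalizing p with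
  | nil => exact hp
  | cons x w ih => exact ih (stepM_le hm hp x)

theorem stepN_le {n q} (hn : 4 ≤ n) (hq : q ≤ n - 1) (x) : stepBAD n q x ≤ n - 1 := by
  cases x <;> simp only [stepBAD] <;> first | omega | (split_ifs <;> omega)

theorem evN_le {n} (hn : 4 ≤ n) {q} (hq : q ≤ n - 1) (w) : evN n q w ≤ n - 1 := by
  induction w generalizing q with
  | nil => exact hq
  | cons x w ih => exact ih (stepN_le hn hq x)

theorem stepM_pos {m p x} (hx : x ≠ d) : 1 ≤ stepM m p x := by
  cases x <;> first
    | exact absurd rfl hx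
    | (simp only [stepM] <;> split_ifs <;> omega)

theorem evM_pos {m p w} (hw : ∀ x ∈ w, x ≠ d) (hne : w ≠ []) : 1 ≤ evM m p w := by
  induction w generalizing p with
  | nil => exact absurd rfl hne
  | cons x w ih =>
    rcases eq_or_ne w [] with h | h
    · subst h; exact stepM_pos (hw x (by simp))
    · exact ih (fun y hy => hw y (by simp [hy])) h

theorem stepN_posx {n q x} (hx : x ≠ c) : 1 ≤ stepBAD n q x ∨ stepBAD n q x = q := by
  cases x <;> first
    | exact absurd rfl hx
    | (simp only [stepBAD] <;> split_ifs <;> omega)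

theorem stepN_pos {n q x} (hx : x ≠ c) (hq : 1 ≤ q) : 1 ≤ stepBAD n q x := by
  rcases stepN_posx (n := n) (q := q) hx with h | h <;> omega

theorem evN_pos {n q w} (hw : ∀ x ∈ w, x ≠ c) (hne : w ≠ []) : 1 ≤ evN n q w := by
  induction w generalizing q with
  | nil => exact absurd rfl hne
  | cons x w ih =>
    have hx := hw x (by simp)
    rcases eq_or_ne w [] with h | h
    · subst h
      show 1 ≤ stepBAD n q x
      cases x <;> first
        | exact absurd rfl hx
        | (simp only [stepBAD] <;> split_ifs <;> omega)
    · exact ih (fun y hy => hw y (by simp [hy])) h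

/-! ### replicate-word evaluations -/

theorem evM_rep_c {m} (hm : 4 ≤ m) {p k} (h : p + k ≤ m - 1) :
    evM m p (rep c k) = p + k := by
  induction k generalizing p with
  | zero => simp [evM_nil]
  | succ k ih =>
    rw [rep_succ, evM_cons, stepM_c, if_neg (by omega)]
    rw [ih (by omega)]; omega

theorem evM_rep_a {m} (hm : 4 ≤ m) {p} (hp : 1 ≤ p) (hp' : p ≤ m - 1) (k) :
    evM m p (rep a k) = (p - 1 + k) % (m - 1) + 1 := by
  induction k generalizing p with
  | zero => simp [evM_nil, Nat.mod_eq_of_lt (by omega : p - 1 < m - 1)]; omega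
  | succ k ih =>
    rw [rep_succ, evM_cons, stepM_a]
    split_ifs with h
    · rw [ih (by omega) (by omega)]
      subst h
      congr 1
      conv_rhs => rw [show m - 1 - 1 + (k + 1) = k + (m - 1) by omega, Nat.add_mod_right]
      norm_num
    · rw [ih (by omega) (by omega)]
      congr 2
      omega

theorem evM_rep_b {m} (hm : 4 ≤ m) {p} (hp : 1 ≤ p) (k) :
    evM m p (rep b k) = if 3 ≤ p then p else if k % 2 = 0 then p else 3 - p := by
  induction k generalizing p with
  | zero => simp [evM_nil]
  | succ k ih =>
    rw [rep_succ, evM_cons, stepM_b, if_neg (by omega : ¬ p = 0)]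
    rcases eq_or_ne p 1 with rfl | h1
    · rw [show (if (1:ℕ) = 1 then 2 else if (1:ℕ) = 2 then 1 else 1) = 2 from rfl,
        ih (by omega)]
      split_ifs <;> omega
    · rcases eq_or_ne p 2 with rfl | h2
      · rw [show (if (2:ℕ) = 1 then 2 else if (2:ℕ) = 2 then 1 else 2) = 1 from rfl,
          ih (by omega)]
        split_ifs <;> omega
      · rw [if_neg h1, if_neg h2, ih (by omega)]
        split_ifs <;> omega

theorem evN_rep_b {n} (hn : 4 ≤ n) {q k} (h : q + k ≤ n - 1) :
    evN n q (rep b k) = q + k := by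
  induction k generalizing q with
  | zero => simp [evN_nil]
  | succ k ih =>
    rw [rep_succ, evN_cons, stepN_b, if_neg (by omega)]
    rw [ih (by omega)]; omega

theorem evN_rep_a {n} (hn : 4 ≤ n) {q} (hq : 1 ≤ q) (k) :
    evN n q (rep a k) = if 3 ≤ q then q else if k % 2 = 0 then q else 3 - q := by
  induction k generalizing q with
  | zero => simp [evN_nil]
  | succ k ih =>
    rw [rep_succ, evN_cons, stepN_a, if_neg (by omega : ¬ q = 0)]
    rcases eq_or_ne q 1 with rfl | h1
    · rw [show (if (1:ℕ) = 1 then 2 else if (1:ℕ) = 2 then 1 else 1) = 2 from rfl,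
        ih (by omega)]
      split_ifs <;> omega
    · rcases eq_or_ne q 2 with rfl | h2
      · rw [show (if (2:ℕ) = 1 then 2 else if (2:ℕ) = 2 then 1 else 2) = 1 from rfl,
          ih (by omega)]
        split_ifs <;> omega
      · rw [if_neg h1, if_neg h2, ih (by omega)]
        split_ifs <;> omega

/-! ### injectivity on live states for words over `{a,b}` -/

theorem stepM_injOn {m} (hm : 4 ≤ m) {p p' : ℕ} {x : ABCD} (hx : x = a ∨ x = b)
    (hp : 1 ≤ p) (hp' : p ≤ m - 1) (hq : 1 ≤ p') (hq' : p' ≤ m - 1)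
    (h : stepM m p x = stepM m p' x) : p = p' := by
  rcases hx with rfl | rfl <;> simp only [stepM] at h <;> split_ifs at h <;> omega

theorem evM_injOn {m} (hm : 4 ≤ m) {w : Wd} (hw : ∀ x ∈ w, x = a ∨ x = b)
    {p p' : ℕ} (hp : 1 ≤ p) (hp' : p ≤ m - 1) (hq : 1 ≤ p') (hq' : p' ≤ m - 1)
    (h : evM m p w = evM m p' w) : p = p' := by
  induction w generalizing p p' with
  | nil => exact h
  | cons x w ih =>
    have hx := hw x (by simp)
    have hxd : x ≠ d := by rcases hx with rfl | rfl <;> simp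
    rw [evM_cons, evM_cons] at h
    have h2 := ih (fun y hy => hw y (by simp [hy]))
      (stepM_pos hxd) (stepM_le hm hp' x) (stepM_pos hxd) (stepM_le hm hq' x) h
    exact stepM_injOn hm hx hp hp' hq hq' h2

theorem stepN_injOn {n} (hn : 4 ≤ n) {q q' : ℕ} {x : ABCD} (hx : x = a ∨ x = b)
    (hp : 1 ≤ q) (hp' : q ≤ n - 1) (hq : 1 ≤ q') (hq' : q' ≤ n - 1)
    (h : stepBAD n q x = stepBAD n q' x) : q = q' := by
  rcases hx with rfl | rfl <;> simp only [stepBAD] at h <;> split_ifs at h <;> omega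

theorem stepN_posAB {n q} {x : ABCD} (hq : 1 ≤ q) (hx : x = a ∨ x = b) :
    1 ≤ stepBAD n q x := by
  rcases hx with rfl | rfl <;> simp only [stepBAD] <;> split_ifs <;> omega

theorem evN_injOn {n} (hn : 4 ≤ n) {w : Wd} (hw : ∀ x ∈ w, x = a ∨ x = b)
    {q q' : ℕ} (hp : 1 ≤ q) (hp' : q ≤ n - 1) (hq : 1 ≤ q') (hq' : q' ≤ n - 1)
    (h : evN n q w = evN n q' w) : q = q' := by
  induction w generalizing q q' with
  | nil => exact h
  | cons x w ih =>
    have hx := hw x (by simp)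
    rw [evN_cons, evN_cons] at h
    have h2 := ih (fun y hy => hw y (by simp [hy]))
      (stepN_posAB hp hx) (stepN_le hn hp' x) (stepN_posAB hq hx) (stepN_le hn hq' x) h
    exact stepN_injOn hn hx hp hp' hq hq' h2

end S19
namespace S19
open ABCD

theorem mem_rep {x y : ABCD} {k} (h : x ∈ rep y k) : x = y := List.eq_of_mem_replicate h
theorem rep_add (x : ABCD) (i j) : rep x (i + j) = rep x i ++ rep x j := List.replicate_add ..

/-- Aim the `M`-automaton at any live state with a power of `a`. -/
theorem aimA {m} (hm : 4 ≤ m) {s p : ℕ} (hs : 1 ≤ s) (hs' : s ≤ m - 1)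
    (hp : 1 ≤ p) (hp' : p ≤ m - 1) :
    evM m s (rep a (m - 1 + p - s)) = p := by
  rw [evM_rep_a hm hs hs', show s - 1 + (m - 1 + p - s) = (p - 1) + (m - 1) by omega,
    Nat.add_mod_right, Nat.mod_eq_of_lt (by omega)]
  omega

/-- Cancellation for the `a`-cycle. -/
theorem cyc_inj {m} (hm : 4 ≤ m) {s s' i : ℕ} (hs : 1 ≤ s) (hs' : s ≤ m - 1)
    (ht : 1 ≤ s') (ht' : s' ≤ m - 1)
    (h : (s - 1 + i) % (m - 1) = (s' - 1 + i) % (m - 1)) : s = s' := by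
  have h2 : s - 1 ≡ s' - 1 [MOD m - 1] := (Nat.ModEq.add_right_cancel' i h)
  have h3 : (s - 1) % (m - 1) = (s' - 1) % (m - 1) := h2
  rw [Nat.mod_eq_of_lt (by omega), Nat.mod_eq_of_lt (by omega)] at h3
  omega

theorem stepM_zero_a {m} : stepM m 0 a = 1 := by
  rw [stepM_a]; split_ifs <;> rfl

/-- `evM` from `0` on a nonempty power of `a`. -/
theorem evM_zero_rep_a {m} (hm : 4 ≤ m) {k} (hk : 1 ≤ k) :
    evM m 0 (rep a k) = (k - 1) % (m - 1) + 1 := by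
  obtain ⟨k, rfl⟩ : ∃ k', k = k' + 1 := ⟨k - 1, by omega⟩
  rw [rep_succ, evM_cons, stepM_zero_a, evM_rep_a hm le_rfl (by omega)]
  simp

/-- `evM` from `0` on a nonempty power of `b`. -/
theorem evM_zero_rep_b {m} (hm : 4 ≤ m) {k} (hk : 1 ≤ k) :
    evM m 0 (rep b k) = if (k - 1) % 2 = 0 then 2 else 1 := by
  obtain ⟨k, rfl⟩ : ∃ k', k = k' + 1 := ⟨k - 1, by omega⟩
  rw [rep_succ, evM_cons, show stepM m 0 b = 2 from rfl, evM_rep_b hm (by omega)]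
  simp

theorem stepM_b_sw {m p : ℕ} (hp : 1 ≤ p) :
    stepM m (if p = 1 then 2 else if p = 2 then 1 else p) b = p := by
  split_ifs with h1 h2
  · subst h1; rfl
  · subst h2; rfl
  · rw [stepM_b, if_neg (by omega), if_neg h1, if_neg h2]

theorem stepM_a_pred {m p : ℕ} (hm : 4 ≤ m) (hp : 1 ≤ p) (hp' : p ≤ m - 1) :
    stepM m (if p = 1 then m - 1 else p - 1) a = p := by
  split_ifs with h1
  · subst h1; rw [stepM_a, if_pos rfl]
  · rw [stepM_a, if_neg (by omega)]; omega

/-- Reach the live pair `(p, 1)` by a word over `{a,b}`. -/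
theorem reach1 {m n} (hm : 4 ≤ m) (hn : 4 ≤ n) {p} (hp : 1 ≤ p) (hp' : p ≤ m - 1) :
    ∃ w : Wd, (∀ x ∈ w, x = a ∨ x = b) ∧ evM m 0 w = p ∧ evN n 0 w = 1 := by
  obtain ⟨sp, hsp⟩ : ∃ sp : ℕ, sp = if p = 1 then 2 else if p = 2 then 1 else p := ⟨_, rfl⟩
  have hsp1 : 1 ≤ sp := by rw [hsp]; split_ifs <;> omega
  have hsp2 : sp ≤ m - 1 := by rw [hsp]; split_ifs <;> omega
  obtain ⟨p1, hp1⟩ : ∃ p1 : ℕ, p1 = evM m 0 (rep b (n - 1)) := ⟨_, rfl⟩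
  have hp1v : p1 = if (n - 1 - 1) % 2 = 0 then 2 else 1 := by
    rw [hp1]; exact evM_zero_rep_b hm (by omega)
  have hp11 : 1 ≤ p1 := by rw [hp1v]; split_ifs <;> omega
  have hp12 : p1 ≤ m - 1 := by rw [hp1v]; split_ifs <;> omega
  refine ⟨rep b (n - 1) ++ rep a (m - 1 + sp - p1) ++ [b], ?_, ?_, ?_⟩
  · intro x hx
    simp only [List.mem_append, List.mem_singleton] at hx
    rcases hx with (hx | hx) | hx
    · right; exact mem_rep hx
    · left; exact mem_rep hx
    · right; exact hx
  · rw [evM_append, evM_append, ← hp1, aimA hm hp11 hp12 hsp1 hsp2]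
    show stepM m sp b = p
    rw [hsp]
    exact stepM_b_sw hp
  · rw [evN_append, evN_append, evN_rep_b hn (by omega), evN_rep_a hn (by omega),
      if_pos (by omega)]
    show stepBAD n (0 + (n - 1)) b = 1
    rw [stepN_b, if_pos (by omega)]

/-- Reach any live pair `(p, q)` by a word over `{a,b}`. -/
theorem reach_live {m n} (hm : 4 ≤ m) (hn : 4 ≤ n) {p q} (hp : 1 ≤ p) (hp' : p ≤ m - 1)
    (hq : 1 ≤ q) (hq' : q ≤ n - 1) :
    ∃ w : Wd, (∀ x ∈ w, x = a ∨ x = b) ∧ evM m 0 w = p ∧ evN n 0 w = q := by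
  rcases eq_or_ne q 1 with rfl | hq1
  · exact reach1 hm hn hp hp'
  rcases eq_or_ne q 2 with rfl | hq2
  · -- go to (p⁻, 1) then apply `a`
    obtain ⟨pm, hpm⟩ : ∃ pm : ℕ, pm = if p = 1 then m - 1 else p - 1 := ⟨_, rfl⟩
    have hpm1 : 1 ≤ pm := by rw [hpm]; split_ifs <;> omega
    have hpm2 : pm ≤ m - 1 := by rw [hpm]; split_ifs <;> omega
    obtain ⟨w, hab, hM, hN⟩ := reach1 hm hn (p := pm) hpm1 hpm2
    refine ⟨w ++ [a], ?_, ?_, ?_⟩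
    · intro x hx
      simp only [List.mem_append, List.mem_singleton] at hx
      rcases hx with hx | hx
      · exact hab x hx
      · left; exact hx
    · rw [evM_append, hM]
      show stepM m pm a = p
      rw [hpm]
      exact stepM_a_pred hm hp hp'
    · rw [evN_append, hN]
      rfl
  · -- q ≥ 3 : `b^q` then `a`-power
    obtain ⟨p0, hp0⟩ : ∃ p0 : ℕ, p0 = evM m 0 (rep b q) := ⟨_, rfl⟩
    have hp0v : p0 = if (q - 1) % 2 = 0 then 2 else 1 := by
      rw [hp0]; exact evM_zero_rep_b hm (by omega)
    have h01 : 1 ≤ p0 := by rw [hp0v]; split_ifs <;> omega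
    have h02 : p0 ≤ m - 1 := by rw [hp0v]; split_ifs <;> omega
    refine ⟨rep b q ++ rep a (m - 1 + p - p0), ?_, ?_, ?_⟩
    · intro x hx
      simp only [List.mem_append] at hx
      rcases hx with hx | hx
      · right; exact mem_rep hx
      · left; exact mem_rep hx
    · rw [evM_append, ← hp0, aimA hm h01 h02 hp hp']
    · rw [evN_append, evN_rep_b hn (by omega), evN_rep_a hn (by omega), if_pos (by omega)]
      omega

/-! ### distinguishing words, `M` side -/

theorem stepc_final {m v} (hm : 4 ≤ m) (hv : v ≤ m - 1) :
    stepM m v c = m - 1 ↔ v = m - 2 := by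
  rw [stepM_c]; split_ifs <;> omega

theorem Mhit {m} (hm : 4 ≤ m) {p} (hp : 1 ≤ p) (hp' : p ≤ m - 1) :
    evM m p (rep a (2 * m - 3 - p) ++ [c]) = m - 1 := by
  rw [evM_append, evM_rep_a hm hp hp',
    show p - 1 + (2 * m - 3 - p) = (m - 3) + (m - 1) by omega,
    Nat.add_mod_right, Nat.mod_eq_of_lt (by omega)]
  show stepM m (m - 3 + 1) c = m - 1
  rw [(stepc_final hm (by omega)).2 (by omega)]

theorem Mmiss {m} (hm : 4 ≤ m) {p p'} (hp : 1 ≤ p) (hp' : p ≤ m - 1)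
    (h1 : 1 ≤ p') (h2 : p' ≤ m - 1) (hne : p' ≠ p) :
    evM m p' (rep a (2 * m - 3 - p) ++ [c]) ≠ m - 1 := by
  intro hcon
  rw [evM_append, evM_rep_a hm h1 h2] at hcon
  rw [show evM m ((p' - 1 + (2 * m - 3 - p)) % (m - 1) + 1) [c]
      = stepM m ((p' - 1 + (2 * m - 3 - p)) % (m - 1) + 1) c from rfl] at hcon
  have hlt := Nat.mod_lt (p' - 1 + (2 * m - 3 - p)) (y := m - 1) (by omega)
  rw [stepc_final hm (by omega)] at hcon
  have hp2 : (p - 1 + (2 * m - 3 - p)) % (m - 1) = m - 3 := by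
    rw [show p - 1 + (2 * m - 3 - p) = (m - 3) + (m - 1) by omega,
      Nat.add_mod_right, Nat.mod_eq_of_lt (by omega)]
  exact hne (cyc_inj hm h1 h2 hp hp' (i := 2 * m - 3 - p) (by omega))

theorem M0hit {m} (hm : 4 ≤ m) : evM m 0 (rep a (m - 2) ++ [c]) = m - 1 := by
  rw [evM_append, evM_zero_rep_a hm (by omega)]
  have h1 : (m - 2 - 1) % (m - 1) = m - 3 := Nat.mod_eq_of_lt (by omega) |>.trans (by omega)
  rw [h1]
  show stepM m (m - 3 + 1) c = m - 1
  rw [(stepc_final hm (by omega)).2 (by omega)]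

theorem M0miss {m} (hm : 4 ≤ m) {p'} (h1 : 1 ≤ p') (h2 : p' ≤ m - 2) :
    evM m p' (rep a (m - 2) ++ [c]) ≠ m - 1 := by
  intro hcon
  rw [evM_append, evM_rep_a hm h1 (by omega)] at hcon
  rw [show evM m ((p' - 1 + (m - 2)) % (m - 1) + 1) [c]
      = stepM m ((p' - 1 + (m - 2)) % (m - 1) + 1) c from rfl] at hcon
  have hlt := Nat.mod_lt (p' - 1 + (m - 2)) (y := m - 1) (by omega)
  rw [stepc_final hm (by omega)] at hcon
  have h3 : (p' - 1 + (m - 2)) % (m - 1) = m - 3 := by omega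
  have h4 : (p' + (m - 3)) % (m - 1) = (0 + (m - 3)) % (m - 1) := by
    rw [show p' + (m - 3) = p' - 1 + (m - 2) by omega, h3, Nat.zero_add,
      Nat.mod_eq_of_lt (by omega)]
  have h5 : p' ≡ 0 [MOD m - 1] := Nat.ModEq.add_right_cancel' (m - 3) h4
  have h6 : p' % (m - 1) = 0 % (m - 1) := h5
  rw [Nat.mod_eq_of_lt (by omega), Nat.zero_mod] at h6
  omega

theorem Mtophit {m} (hm : 4 ≤ m) : evM m (m - 1) (rep c (m - 2)) = m - 1 := by
  rw [show (m - 2 : ℕ) = 1 + (m - 3) by omega, rep_add, evM_append,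
    show evM m (m - 1) (rep c 1) = stepM m (m - 1) c from rfl, stepM_c, if_pos rfl,
    evM_rep_c hm (by omega)]
  omega

theorem Mtopmiss {m} (hm : 4 ≤ m) : evM m 0 (rep c (m - 2)) ≠ m - 1 := by
  rw [evM_rep_c hm (by omega)]; omega

/-! ### distinguishing words, `N` side -/

theorem Nhit {n} (hn : 4 ≤ n) {q} (hq : 1 ≤ q) (hq' : q ≤ n - 1) :
    evN n q (rep b (n - 1 - q) ++ [d]) = n - 1 := by
  rw [evN_append, evN_rep_b hn (by omega)]
  show stepBAD n (q + (n - 1 - q)) d = n - 1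
  rw [stepN_d, if_neg (by omega)]
  omega

theorem Nmiss {n} (hn : 4 ≤ n) {q q'} (hq : 1 ≤ q) (hq' : q ≤ n - 1)
    (h1 : 1 ≤ q') (h2 : q' ≤ n - 1) (hne : q' ≠ q) :
    evN n q' (rep b (n - 1 - q) ++ [d]) ≠ n - 1 := by
  rw [evN_append]
  rcases lt_or_gt_of_ne hne with hlt | hgt
  · rw [evN_rep_b hn (by omega)]
    show stepBAD n (q' + (n - 1 - q)) d ≠ n - 1
    rw [stepN_d, if_neg (by omega)]
    omega
  · have e1 : evN n q' (rep b (n - 1 - q')) = n - 1 := by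
      rw [evN_rep_b hn (by omega)]; omega
    have hsplit : rep b (n - 1 - q) = rep b (n - 1 - q') ++ (b :: rep b (q' - q - 1)) := by
      rw [← rep_succ, ← rep_add]; congr 1; omega
    have e2 : evN n (n - 1) (b :: rep b (q' - q - 1)) = q' - q := by
      rw [evN_cons, stepN_b, if_pos rfl, evN_rep_b hn (by omega)]
      omega
    rw [hsplit, evN_append, e1, e2]
    show stepBAD n (q' - q) d ≠ n - 1
    rw [stepN_d, if_neg (by omega)]
    omega

/-! ### an `{a,b}`-word sending a live pair `(p,q)` to the final pair `(m-1, n-1)` -/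

theorem final_word {m n} (hm : 4 ≤ m) (hn : 4 ≤ n) {p q} (hp : 1 ≤ p) (hp' : p ≤ m - 1)
    (hq : 1 ≤ q) (hq' : q ≤ n - 1) :
    ∃ x : Wd, (∀ y ∈ x, y = a ∨ y = b) ∧ evM m p x = m - 1 ∧ evN n q x = n - 1 ∧
      evN n 0 x ≠ n - 1 := by
  obtain ⟨vp, hvp⟩ : ∃ vp : ℕ, vp = evM m p (rep b (n - 1 - q)) := ⟨_, rfl⟩
  have hv : vp = if 3 ≤ p then p else if (n - 1 - q) % 2 = 0 then p else 3 - p := by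
    rw [hvp]; exact evM_rep_b hm hp _
  have hv1 : 1 ≤ vp := by rw [hv]; split_ifs <;> omega
  have hv2 : vp ≤ m - 1 := by rw [hv]; split_ifs <;> omega
  refine ⟨rep b (n - 1 - q) ++ rep a (m - 1 + (m - 1) - vp), ?_, ?_, ?_, ?_⟩
  · intro x hx
    simp only [List.mem_append] at hx
    rcases hx with hx | hx
    · right; exact mem_rep hx
    · left; exact mem_rep hx
  · rw [evM_append, ← hvp, aimA hm hv1 hv2 (by omega) le_rfl]
  · rw [evN_append, evN_rep_b hn (by omega), evN_rep_a hn (by omega), if_pos (by omega)]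
    omega
  · rw [evN_append, evN_rep_b hn (by omega)]
    rcases Nat.eq_zero_or_pos (n - 1 - q) with h0 | h0
    · rw [h0]
      rcases Nat.eq_zero_or_pos (m - 1 + (m - 1) - vp) with ht | ht
      · rw [ht]
        show (0:ℕ) ≠ n - 1
        omega
      · rw [show m - 1 + (m - 1) - vp = 1 + (m - 1 + (m - 1) - vp - 1) by omega, rep_add,
          evN_append, show evN n (0 + 0) (rep a 1) = stepBAD n (0 + 0) a from rfl,
          show stepBAD n (0 + 0) a = 2 from rfl, evN_rep_a hn (by omega)]
        split_ifs <;> omega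
    · rw [evN_rep_a hn (by omega)]
      split_ifs <;> omega

end S19
namespace S19

theorem mem_leftQuot {γ : Type} (L : Set (List γ)) (w x : List γ) :
    x ∈ leftQuot L w ↔ w ++ x ∈ L := Iff.rfl

theorem leftQuot_nil {γ : Type} (L : Set (List γ)) : leftQuot L [] = L := by
  ext x; simp [leftQuot]

theorem leftQuot_union {γ : Type} (K₁ K₂ : Set (List γ)) (w : List γ) :
    leftQuot (K₁ ∪ K₂) w = leftQuot K₁ w ∪ leftQuot K₂ w := rfl

theorem leftQuot_symmDiff {γ : Type} (K₁ K₂ : Set (List γ)) (w : List γ) :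
    leftQuot (symmDiff K₁ K₂) w = symmDiff (leftQuot K₁ w) (leftQuot K₂ w) := by
  ext x
  simp [leftQuot, Set.mem_symmDiff]

theorem ncard_prod {α β : Type*} (s : Set α) (t : Set β) :
    (s ×ˢ t).ncard = s.ncard * t.ncard := by
  rw [← Nat.card_coe_set_eq, ← Nat.card_coe_set_eq, ← Nat.card_coe_set_eq,
    Nat.card_congr (Equiv.Set.prod s t), Nat.card_prod]

/-- The main counting device: if the quotients of `L` by words over `A` are classified by
a "state" function `st` with values in a finite set `F`, all states in `F` are reachable,
and distinct states give distinct quotient languages, then the number of quotients is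
`F.card`. -/
theorem card_quotients {γ σ : Type} (A : Set γ) (L : Set (List γ)) (st : List γ → σ)
    (Qf : σ → Set (List γ)) (F : Finset σ)
    (hquot : ∀ w, (∀ x ∈ w, x ∈ A) → leftQuot L w = Qf (st w))
    (hrange : ∀ w, (∀ x ∈ w, x ∈ A) → st w ∈ F)
    (hreach : ∀ s ∈ F, ∃ w, (∀ x ∈ w, x ∈ A) ∧ st w = s)
    (hinj : Set.InjOn Qf ↑F) :
    Nat.card (quotientsOn A L) = F.card := by
  have h1 : quotientsOn A L = Qf '' ↑F := by
    ext K
    constructor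
    · rintro ⟨w, hw, rfl⟩
      exact ⟨st w, hrange w hw, (hquot w hw).symm⟩
    · rintro ⟨s, hs, rfl⟩
      obtain ⟨w, hw, rfl⟩ := hreach s hs
      exact ⟨w, hw, (hquot w hw).symm⟩
  rw [h1, Nat.card_coe_set_eq, Set.ncard_image_of_injOn hinj, Set.ncard_coe_finset]

/-- Generic upper bound for a boolean operation on non-returning languages. -/
theorem upper_general {γ : Type} {A B : Set γ} {L' L : Set (List γ)} {m n : ℕ}
    (hm : 4 ≤ m) (hn : 4 ≤ n)
    (hA : ∀ w ∈ L', ∀ x ∈ w, x ∈ A) (hB : ∀ w ∈ L, ∀ x ∈ w, x ∈ B)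
    (hNR' : NonReturningOn A L') (hNR : NonReturningOn B L)
    (hcard' : Nat.card (quotientsOn A L') = m) (hcard : Nat.card (quotientsOn B L) = n)
    (op : Set (List γ) → Set (List γ) → Set (List γ))
    (hop : ∀ w, leftQuot (op L' L) w = op (leftQuot L' w) (leftQuot L w)) :
    Nat.card (quotientsOn (A ∪ B) (op L' L)) ≤ m * n + 1 := by
  have hfin' : (quotientsOn A L').Finite := by
    by_contra h
    rw [Nat.card_coe_set_eq, Set.Infinite.ncard h] at hcard'
    omega
  have hfin : (quotientsOn B L).Finite := by
    by_contra h
    rw [Nat.card_coe_set_eq, Set.Infinite.ncard h] at hcard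
    omega
  have hmem' : L' ∈ quotientsOn A L' := ⟨[], by simp, (leftQuot_nil L').symm⟩
  have hmem : L ∈ quotientsOn B L := ⟨[], by simp, (leftQuot_nil L).symm⟩
  set T' : Set (Set (List γ)) := (quotientsOn A L' \ {L'}) ∪ {∅} with hT'
  set T : Set (Set (List γ)) := (quotientsOn B L \ {L}) ∪ {∅} with hT
  have hT'fin : T'.Finite := (hfin'.diff.union (Set.finite_singleton _))
  have hTfin : T.Finite := (hfin.diff.union (Set.finite_singleton _))
  have hT'card : T'.ncard ≤ m := by
    calc T'.ncard ≤ (quotientsOn A L' \ {L'}).ncard + ({∅} : Set (Set (List γ))).ncard :=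
          Set.ncard_union_le _ _
    _ ≤ (m - 1) + 1 := by
        rw [Set.ncard_singleton]
        have := Set.ncard_diff_singleton_of_mem hmem'
        rw [Nat.card_coe_set_eq] at hcard'
        omega
    _ ≤ m := by omega
  have hTcard : T.ncard ≤ n := by
    calc T.ncard ≤ (quotientsOn B L \ {L}).ncard + ({∅} : Set (Set (List γ))).ncard :=
          Set.ncard_union_le _ _
    _ ≤ (n - 1) + 1 := by
        rw [Set.ncard_singleton]
        have := Set.ncard_diff_singleton_of_mem hmem
        rw [Nat.card_coe_set_eq] at hcard
        omega
    _ ≤ n := by omega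
  have hsub : quotientsOn (A ∪ B) (op L' L) ⊆
      insert (op L' L) ((fun pq : Set (List γ) × Set (List γ) => op pq.1 pq.2) '' (T' ×ˢ T)) := by
    rintro K ⟨w, hw, rfl⟩
    rcases eq_or_ne w [] with rfl | hne
    · rw [leftQuot_nil]
      exact Set.mem_insert _ _
    · refine Set.mem_insert_of_mem _ ⟨(leftQuot L' w, leftQuot L w), ⟨?_, ?_⟩, (hop w).symm⟩
      · by_cases hall : ∀ x ∈ w, x ∈ A
        · exact Or.inl ⟨⟨w, hall, rfl⟩, hNR' w hne hall⟩
        · right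
          have : leftQuot L' w = ∅ := by
            ext x
            simp only [Set.mem_empty_iff_false, iff_false]
            intro hx
            push_neg at hall
            obtain ⟨y, hy, hyA⟩ := hall
            exact hyA (hA _ hx y (List.mem_append_left x hy))
          simp [this]
      · by_cases hall : ∀ x ∈ w, x ∈ B
        · exact Or.inl ⟨⟨w, hall, rfl⟩, hNR w hne hall⟩
        · right
          have : leftQuot L w = ∅ := by
            ext x
            simp only [Set.mem_empty_iff_false, iff_false]
            intro hx
            push_neg at hall
            obtain ⟨y, hy, hyB⟩ := hall
            exact hyB (hB _ hx y (List.mem_append_left x hy))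
          simp [this]
  have hfin2 : (insert (op L' L)
      ((fun pq : Set (List γ) × Set (List γ) => op pq.1 pq.2) '' (T' ×ˢ T))).Finite :=
    (((hT'fin.prod hTfin).image _).insert _)
  rw [Nat.card_coe_set_eq]
  calc (quotientsOn (A ∪ B) (op L' L)).ncard
      ≤ _ := Set.ncard_le_ncard hsub hfin2
    _ ≤ ((fun pq : Set (List γ) × Set (List γ) => op pq.1 pq.2) '' (T' ×ˢ T)).ncard + 1 :=
        Set.ncard_insert_le _ _
    _ ≤ (T' ×ˢ T).ncard + 1 := by
        have := Set.ncard_image_le (f := fun pq : Set (List γ) × Set (List γ) => op pq.1 pq.2)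
          (hT'fin.prod hTfin)
        omega
    _ = T'.ncard * T.ncard + 1 := by rw [ncard_prod]
    _ ≤ m * n + 1 := by
        have := Nat.mul_le_mul hT'card hTcard
        omega

end S19
namespace S19
open ABCD

/-! ### letter-set helpers -/

theorem noD_ac (i : ℕ) : ∀ y ∈ rep a i ++ [c], y ≠ d := by
  intro y hy
  rcases List.mem_append.1 hy with h | h
  · rw [mem_rep h]; simp
  · simp at h; subst h; simp

theorem notC_ac (i : ℕ) : ¬ ∀ y ∈ rep a i ++ [c], y ≠ c :=
  fun h => (h c (List.mem_append_right _ (by simp))) rfl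

theorem noD_c (k : ℕ) : ∀ y ∈ rep c k, y ≠ d := by
  intro y hy; rw [mem_rep hy]; simp

theorem notC_c {k : ℕ} (hk : 1 ≤ k) : ¬ ∀ y ∈ rep c k, y ≠ c :=
  fun h => h c (List.mem_replicate.2 ⟨by omega, rfl⟩) rfl

theorem noC_bd (j : ℕ) : ∀ y ∈ rep b j ++ [d], y ≠ c := by
  intro y hy
  rcases List.mem_append.1 hy with h | h
  · rw [mem_rep h]; simp
  · simp at h; subst h; simp

theorem notD_bd (j : ℕ) : ¬ ∀ y ∈ rep b j ++ [d], y ≠ d :=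
  fun h => (h d (List.mem_append_right _ (by simp))) rfl

theorem noD_of_ab {w : Wd} (h : ∀ y ∈ w, y = a ∨ y = b) : ∀ y ∈ w, y ≠ d := by
  intro y hy; rcases h y hy with rfl | rfl <;> simp

theorem noC_of_ab {w : Wd} (h : ∀ y ∈ w, y = a ∨ y = b) : ∀ y ∈ w, y ≠ c := by
  intro y hy; rcases h y hy with rfl | rfl <;> simp

/-! ### part (i): states, quotient languages, state set -/

open Classical in
/-- State of a word for the pair automaton of part (i). -/
noncomputable def st1 (m n : ℕ) (w : Wd) : Option ℕ × Option ℕ :=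
  (if ∀ y ∈ w, y ≠ d then some (evM m 0 w) else none,
   if ∀ y ∈ w, y ≠ c then some (evN n 0 w) else none)

def MsideFin (m : ℕ) (s : Option ℕ × Option ℕ) (x : Wd) : Prop :=
  ∃ p, s.1 = some p ∧ (∀ y ∈ x, y ≠ d) ∧ evM m p x = m - 1

def NsideFin (n : ℕ) (s : Option ℕ × Option ℕ) (x : Wd) : Prop :=
  ∃ q, s.2 = some q ∧ (∀ y ∈ x, y ≠ c) ∧ evN n q x = n - 1

def QU (m n : ℕ) (s : Option ℕ × Option ℕ) : Set Wd :=
  {x | MsideFin m s x ∨ NsideFin n s x}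

def QS (m n : ℕ) (s : Option ℕ × Option ℕ) : Set Wd :=
  {x | Xor' (MsideFin m s x) (NsideFin n s x)}

noncomputable def F1 (m n : ℕ) : Finset (Option ℕ × Option ℕ) :=
  insert (some 0, some 0)
    ((((Finset.Ico 1 m).image some) ∪ {none}) ×ˢ (((Finset.Ico 1 n).image some) ∪ {none}))

theorem quotM_char (m : ℕ) (w x : Wd) :
    w ++ x ∈ LmABC m ↔ MsideFin m (st1 m n w) x := by
  rw [mem_LmABC]
  rw [show (∀ y ∈ w ++ x, y ≠ d) ↔ (∀ y ∈ w, y ≠ d) ∧ (∀ y ∈ x, y ≠ d) from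
    List.forall_mem_append, evM_append]
  unfold MsideFin st1
  simp only
  split_ifs with h
  · constructor
    · rintro ⟨⟨h1, h2⟩, h3⟩
      exact ⟨_, rfl, h2, h3⟩
    · rintro ⟨p, hp, h2, h3⟩
      obtain rfl : evM m 0 w = p := Option.some_inj.1 hp
      exact ⟨⟨h, h2⟩, h3⟩
  · constructor
    · rintro ⟨⟨h1, _⟩, _⟩
      exact absurd h1 h
    · rintro ⟨p, hp, _⟩
      exact absurd hp (by simp)

theorem quotN_char (n : ℕ) (w x : Wd) :
    w ++ x ∈ LnBAD n ↔ NsideFin n (st1 m n w) x := by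
  rw [mem_LnBAD]
  rw [show (∀ y ∈ w ++ x, y ≠ c) ↔ (∀ y ∈ w, y ≠ c) ∧ (∀ y ∈ x, y ≠ c) from
    List.forall_mem_append, evN_append]
  unfold NsideFin st1
  simp only
  split_ifs with h
  · constructor
    · rintro ⟨⟨h1, h2⟩, h3⟩
      exact ⟨_, rfl, h2, h3⟩
    · rintro ⟨q, hq, h2, h3⟩
      obtain rfl : evN n 0 w = q := Option.some_inj.1 hq
      exact ⟨⟨h, h2⟩, h3⟩
  · constructor
    · rintro ⟨⟨h1, _⟩, _⟩
      exact absurd h1 h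
    · rintro ⟨q, hq, _⟩
      exact absurd hq (by simp)

theorem hquot_union (m n : ℕ) (w : Wd) :
    leftQuot (LmABC m ∪ LnBAD n) w = QU m n (st1 m n w) := by
  ext x
  exact or_congr (quotM_char m w x) (quotN_char n w x)

theorem hquot_symmdiff (m n : ℕ) (w : Wd) :
    leftQuot (symmDiff (LmABC m) (LnBAD n)) w = QS m n (st1 m n w) := by
  ext x
  have hM := quotM_char (n := n) m w x
  have hN := quotN_char (m := m) n w x
  show w ++ x ∈ symmDiff (LmABC m) (LnBAD n) ↔ _
  rw [Set.mem_symmDiff]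
  show _ ↔ Xor' _ _
  rw [Xor', Xor]
  tauto

/-! ### range and reachability for part (i) -/

theorem st1_nil (m n : ℕ) : st1 m n [] = (some 0, some 0) := by
  unfold st1
  rw [if_pos (by simp), if_pos (by simp)]
  rfl

theorem hrange1 {m n : ℕ} (hm : 4 ≤ m) (hn : 4 ≤ n) (w : Wd) : st1 m n w ∈ F1 m n := by
  rcases eq_or_ne w [] with rfl | hne
  · rw [st1_nil]; exact Finset.mem_insert_self _ _
  · apply Finset.mem_insert_of_mem
    rw [Finset.mem_product]
    constructor
    · show (if ∀ y ∈ w, y ≠ d then some (evM m 0 w) else none) ∈ _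
      split_ifs with h
      · apply Finset.mem_union_left
        exact Finset.mem_image.2 ⟨evM m 0 w, Finset.mem_Ico.2
          ⟨evM_pos h hne, by have := evM_le hm (p := 0) (by omega) w; omega⟩, rfl⟩
      · exact Finset.mem_union_right _ (by simp)
    · show (if ∀ y ∈ w, y ≠ c then some (evN n 0 w) else none) ∈ _
      split_ifs with h
      · apply Finset.mem_union_left
        exact Finset.mem_image.2 ⟨evN n 0 w, Finset.mem_Ico.2
          ⟨evN_pos h hne, by have := evN_le hn (q := 0) (by omega) w; omega⟩, rfl⟩
      · exact Finset.mem_union_right _ (by simp)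

/-- Decomposition of membership in `F1`. -/
theorem memF1 {m n : ℕ} {s : Option ℕ × Option ℕ} (hs : s ∈ F1 m n) :
    s = (some 0, some 0) ∨
      ((s.1 = none ∨ ∃ p, 1 ≤ p ∧ p ≤ m - 1 ∧ s.1 = some p) ∧
       (s.2 = none ∨ ∃ q, 1 ≤ q ∧ q ≤ n - 1 ∧ s.2 = some q)) := by
  rcases Finset.mem_insert.1 hs with h | h
  · exact Or.inl h
  · right
    rw [Finset.mem_product] at h
    obtain ⟨h1, h2⟩ := h
    constructor
    · rcases Finset.mem_union.1 h1 with h | h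
      · obtain ⟨p, hp, hps⟩ := Finset.mem_image.1 h
        rw [Finset.mem_Ico] at hp
        exact Or.inr ⟨p, hp.1, by omega, hps.symm⟩
      · simp at h
        exact Or.inl h
    · rcases Finset.mem_union.1 h2 with h | h
      · obtain ⟨q, hq, hqs⟩ := Finset.mem_image.1 h
        rw [Finset.mem_Ico] at hq
        exact Or.inr ⟨q, hq.1, by omega, hqs.symm⟩
      · simp at h
        exact Or.inl h

theorem hreach1 {m n : ℕ} (hm : 4 ≤ m) (hn : 4 ≤ n) {s : Option ℕ × Option ℕ}
    (hs : s ∈ F1 m n) : ∃ w : Wd, st1 m n w = s := by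
  rcases memF1 hs with rfl | ⟨h1, h2⟩
  · exact ⟨[], st1_nil m n⟩
  obtain ⟨α, β⟩ := s
  simp only at h1 h2
  rcases h1 with rfl | ⟨p, hp1, hp2, rfl⟩
  · rcases h2 with rfl | ⟨q, hq1, hq2, rfl⟩
    · -- (none, none) : word `c d`
      refine ⟨[c, d], ?_⟩
      unfold st1
      rw [if_neg (by intro h; exact h d (by simp) rfl), if_neg (by intro h; exact h c (by simp) rfl)]
    · -- (none, some q)
      rcases eq_or_ne q 1 with rfl | hq
      · refine ⟨[d, a], ?_⟩
        unfold st1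
        rw [if_neg (by intro h; exact h d (by simp) rfl), if_pos (by intro y hy; simp at hy; rcases hy with rfl | rfl <;> simp)]
        have : evN n 0 [d, a] = 1 := rfl
        rw [this]
      · refine ⟨d :: rep b (q - 2), ?_⟩
        unfold st1
        rw [if_neg (by intro h; exact h d (by simp) rfl),
          if_pos (by
            intro y hy
            rcases List.mem_cons.1 hy with rfl | hy'
            · simp
            · rw [mem_rep hy']; simp)]
        rw [evN_cons, show stepBAD n 0 d = 2 from rfl, evN_rep_b hn (by omega)]
        congr 2
        omega
  · rcases h2 with rfl | ⟨q, hq1, hq2, rfl⟩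
    · -- (some p, none) : word `c^p`
      refine ⟨rep c p, ?_⟩
      unfold st1
      rw [if_pos (noD_c p), if_neg (notC_c hp1), show evM m 0 (rep c p) = 0 + p from
        evM_rep_c hm (by omega)]
      rw [Nat.zero_add]
    · -- (some p, some q) : live pair
      obtain ⟨w, hab, hM, hN⟩ := reach_live hm hn hp1 hp2 hq1 hq2
      refine ⟨w, ?_⟩
      unfold st1
      rw [if_pos (noD_of_ab hab), if_pos (noC_of_ab hab), hM, hN]

/-! ### injectivity for part (i) -/

theorem inj1 {m n : ℕ} (hm : 4 ≤ m) (hn : 4 ≤ n) (Qg : Option ℕ × Option ℕ → Set Wd)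
    (hc : ∀ s x, (∀ y ∈ x, y ≠ d) → (¬ ∀ y ∈ x, y ≠ c) →
      (x ∈ Qg s ↔ ∃ p, s.1 = some p ∧ evM m p x = m - 1))
    (hd : ∀ s x, (∀ y ∈ x, y ≠ c) → (¬ ∀ y ∈ x, y ≠ d) →
      (x ∈ Qg s ↔ ∃ q, s.2 = some q ∧ evN n q x = n - 1)) :
    Set.InjOn Qg ↑(F1 m n) := by
  -- first: the zero state is fixed
  have hzero : ∀ u v : Option ℕ × Option ℕ, u ∈ F1 m n → v ∈ F1 m n → Qg u = Qg v →
      u = (some 0, some 0) → v = (some 0, some 0) := by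
    intro u v hu hv huv hu0
    rcases memF1 hv with h | ⟨h1, h2⟩
    · exact h
    exfalso
    -- the word a^(m-2) c is in Qg u
    have hx : (rep a (m - 2) ++ [c]) ∈ Qg u := by
      rw [hc u _ (noD_ac _) (notC_ac _)]
      exact ⟨0, by rw [hu0], M0hit hm⟩
    rw [huv, hc v _ (noD_ac _) (notC_ac _)] at hx
    obtain ⟨p', hp', hfin⟩ := hx
    rcases h1 with h1 | ⟨p, hp1, hp2, hps⟩
    · rw [h1] at hp'; cases hp'
    rw [hps] at hp'
    obtain rfl : p = p' := Option.some_inj.1 hp'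
    rcases eq_or_ne p (m - 1) with rfl | hpm
    · -- v.1 = some (m-1) : use c^(m-2)
      have hy : (rep c (m - 2)) ∈ Qg v := by
        rw [hc v _ (noD_c _) (notC_c (by omega))]
        exact ⟨m - 1, hps, Mtophit hm⟩
      rw [← huv, hc u _ (noD_c _) (notC_c (by omega))] at hy
      obtain ⟨p0, hp0, hfin0⟩ := hy
      rw [hu0] at hp0
      obtain rfl : (0 : ℕ) = p0 := Option.some_inj.1 hp0
      exact Mtopmiss hm hfin0
    · exact M0miss hm hp1 (by omega) hfin
  intro u hu v hv huv
  rcases memF1 hu with hu0 | ⟨hu1, hu2⟩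
  · rw [hu0, (hzero u v hu hv huv hu0)]
  rcases memF1 hv with hv0 | ⟨hv1, hv2⟩
  · rw [hv0, (hzero v u hv hu huv.symm hv0)]
  -- both in the product part
  have hfst : u.1 = v.1 := by
    rcases hu1 with h1 | ⟨p, hp1, hp2, hps⟩
    · rcases hv1 with h1' | ⟨p', hp1', hp2', hps'⟩
      · rw [h1, h1']
      · exfalso
        have hx : (rep a (2 * m - 3 - p') ++ [c]) ∈ Qg v := by
          rw [hc v _ (noD_ac _) (notC_ac _)]
          exact ⟨p', hps', Mhit hm hp1' hp2'⟩
        rw [← huv, hc u _ (noD_ac _) (notC_ac _)] at hx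
        obtain ⟨p0, hp0, _⟩ := hx
        rw [h1] at hp0
        cases hp0
    · have hx : (rep a (2 * m - 3 - p) ++ [c]) ∈ Qg u := by
        rw [hc u _ (noD_ac _) (notC_ac _)]
        exact ⟨p, hps, Mhit hm hp1 hp2⟩
      rw [huv, hc v _ (noD_ac _) (notC_ac _)] at hx
      obtain ⟨p', hp', hfin⟩ := hx
      rcases hv1 with h1' | ⟨p'', hp1', hp2', hps'⟩
      · rw [h1'] at hp'; cases hp'
      rw [hps'] at hp'
      obtain rfl := Option.some_inj.1 hp'
      have heq2 : p'' = p := by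
        by_contra hne
        exact Mmiss hm hp1 hp2 hp1' hp2' hne hfin
      rw [hps, hps', heq2]
  have hsnd : u.2 = v.2 := by
    rcases hu2 with h2 | ⟨q, hq1, hq2, hqs⟩
    · rcases hv2 with h2' | ⟨q', hq1', hq2', hqs'⟩
      · rw [h2, h2']
      · exfalso
        have hx : (rep b (n - 1 - q') ++ [d]) ∈ Qg v := by
          rw [hd v _ (noC_bd _) (notD_bd _)]
          exact ⟨q', hqs', Nhit hn hq1' hq2'⟩
        rw [← huv, hd u _ (noC_bd _) (notD_bd _)] at hx
        obtain ⟨q0, hq0, _⟩ := hx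
        rw [h2] at hq0
        cases hq0
    · have hx : (rep b (n - 1 - q) ++ [d]) ∈ Qg u := by
        rw [hd u _ (noC_bd _) (notD_bd _)]
        exact ⟨q, hqs, Nhit hn hq1 hq2⟩
      rw [huv, hd v _ (noC_bd _) (notD_bd _)] at hx
      obtain ⟨q', hq', hfin⟩ := hx
      rcases hv2 with h2' | ⟨q'', hq1', hq2', hqs'⟩
      · rw [h2'] at hq'; cases hq'
      rw [hqs'] at hq'
      obtain rfl := Option.some_inj.1 hq'
      have heq2 : q'' = q := by
        by_contra hne
        exact Nmiss hn hq1 hq2 hq1' hq2' hne hfin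
      rw [hqs, hqs', heq2]
  exact Prod.ext hfst hsnd

/-- The two word-characterizations hold for `QU`. -/
theorem QU_c_char {m n : ℕ} (s : Option ℕ × Option ℕ) (x : Wd)
    (hxD : ∀ y ∈ x, y ≠ d) (hxC : ¬ ∀ y ∈ x, y ≠ c) :
    x ∈ QU m n s ↔ ∃ p, s.1 = some p ∧ evM m p x = m - 1 := by
  unfold QU MsideFin NsideFin
  constructor
  · rintro (⟨p, h1, h2, h3⟩ | ⟨q, h1, h2, h3⟩)
    · exact ⟨p, h1, h3⟩
    · exact absurd h2 hxC
  · rintro ⟨p, h1, h3⟩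
    exact Or.inl ⟨p, h1, hxD, h3⟩

theorem QU_d_char {m n : ℕ} (s : Option ℕ × Option ℕ) (x : Wd)
    (hxC : ∀ y ∈ x, y ≠ c) (hxD : ¬ ∀ y ∈ x, y ≠ d) :
    x ∈ QU m n s ↔ ∃ q, s.2 = some q ∧ evN n q x = n - 1 := by
  unfold QU MsideFin NsideFin
  constructor
  · rintro (⟨p, h1, h2, h3⟩ | ⟨q, h1, h2, h3⟩)
    · exact absurd h2 hxD
    · exact ⟨q, h1, h3⟩
  · rintro ⟨q, h1, h3⟩
    exact Or.inr ⟨q, h1, hxC, h3⟩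

theorem QS_c_char {m n : ℕ} (s : Option ℕ × Option ℕ) (x : Wd)
    (hxD : ∀ y ∈ x, y ≠ d) (hxC : ¬ ∀ y ∈ x, y ≠ c) :
    x ∈ QS m n s ↔ ∃ p, s.1 = some p ∧ evM m p x = m - 1 := by
  unfold QS MsideFin NsideFin
  rw [Set.mem_setOf_eq, Xor']
  constructor
  · rintro (⟨⟨p, h1, h2, h3⟩, _⟩ | ⟨⟨q, h1, h2, h3⟩, _⟩)
    · exact ⟨p, h1, h3⟩
    · exact absurd h2 hxC
  · rintro ⟨p, h1, h3⟩
    exact Or.inl ⟨⟨p, h1, hxD, h3⟩, fun ⟨q, g1, g2, g3⟩ => hxC g2⟩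

theorem QS_d_char {m n : ℕ} (s : Option ℕ × Option ℕ) (x : Wd)
    (hxC : ∀ y ∈ x, y ≠ c) (hxD : ¬ ∀ y ∈ x, y ≠ d) :
    x ∈ QS m n s ↔ ∃ q, s.2 = some q ∧ evN n q x = n - 1 := by
  unfold QS MsideFin NsideFin
  rw [Set.mem_setOf_eq, Xor']
  constructor
  · rintro (⟨⟨p, h1, h2, h3⟩, _⟩ | ⟨⟨q, h1, h2, h3⟩, _⟩)
    · exact absurd h2 hxD
    · exact ⟨q, h1, h3⟩
  · rintro ⟨q, h1, h3⟩
    exact Or.inr ⟨⟨q, h1, hxC, h3⟩, fun ⟨p, g1, g2, g3⟩ => hxD g2⟩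

/-! ### cardinality of `F1` -/

theorem cardF1 {m n : ℕ} (hm : 4 ≤ m) (hn : 4 ≤ n) : (F1 m n).card = m * n + 1 := by
  unfold F1
  rw [Finset.card_insert_of_notMem, Finset.card_product]
  · have c1 : (((Finset.Ico 1 m).image some) ∪ {none}).card = m := by
      rw [Finset.card_union_of_disjoint (by simp), Finset.card_image_of_injective _
        (Option.some_injective ℕ), Nat.card_Ico, Finset.card_singleton]
      omega
    have c2 : (((Finset.Ico 1 n).image some) ∪ {none}).card = n := by
      rw [Finset.card_union_of_disjoint (by simp), Finset.card_image_of_injective _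
        (Option.some_injective ℕ), Nat.card_Ico, Finset.card_singleton]
      omega
    rw [c1, c2]
  · rw [Finset.mem_product]
    rintro ⟨h1, h2⟩
    rcases Finset.mem_union.1 h1 with h | h
    · obtain ⟨p, hp, hps⟩ := Finset.mem_image.1 h
      rw [Finset.mem_Ico] at hp
      obtain rfl : p = 0 := Option.some_inj.1 hps
      omega
    · simp at h

end S19
namespace S19
open ABCD

theorem noCD_of_ab {w : Wd} (h : ∀ y ∈ w, y = a ∨ y = b) : ∀ y ∈ w, y ≠ c ∧ y ≠ d := by
  intro y hy; rcases h y hy with rfl | rfl <;> simp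

/-! ### part (ii): `LmABC \ LnBA` over `{a,b,c}` -/

open Classical in
noncomputable def st2 (m n : ℕ) (w : Wd) : ℕ × Option ℕ :=
  (evM m 0 w, if ∀ y ∈ w, y ≠ c then some (evN n 0 w) else none)

def Q2 (m n : ℕ) (s : ℕ × Option ℕ) : Set Wd :=
  {x | (∀ y ∈ x, y ≠ d) ∧ evM m s.1 x = m - 1 ∧
    ∀ q, s.2 = some q → ¬((∀ y ∈ x, y ≠ c ∧ y ≠ d) ∧ evN n q x = n - 1)}

noncomputable def F2 (m n : ℕ) : Finset (ℕ × Option ℕ) :=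
  insert (0, some 0) ((Finset.Ico 1 m) ×ˢ (((Finset.Ico 1 n).image some) ∪ {none}))

theorem hquot2 {m n : ℕ} (w : Wd) (hw : ∀ y ∈ w, y ≠ d) :
    leftQuot (LmABC m \ LnBA n) w = Q2 m n (st2 m n w) := by
  ext x
  show w ++ x ∈ LmABC m ∧ w ++ x ∉ LnBA n ↔ _
  rw [mem_LmABC, mem_LnBA,
    show (∀ y ∈ w ++ x, y ≠ d) ↔ _ from List.forall_mem_append,
    show (∀ y ∈ w ++ x, y ≠ c ∧ y ≠ d) ↔ _ from List.forall_mem_append,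
    evM_append, evN_append]
  unfold Q2 st2
  simp only [Set.mem_setOf_eq]
  split_ifs with h
  · constructor
    · rintro ⟨⟨⟨h1, h2⟩, h3⟩, h4⟩
      refine ⟨h2, h3, ?_⟩
      rintro q hq ⟨g1, g2⟩
      obtain rfl : evN n 0 w = q := Option.some_inj.1 hq
      exact h4 ⟨⟨fun y hy => ⟨h y hy, hw y hy⟩, g1⟩, g2⟩
    · rintro ⟨h2, h3, h4⟩
      refine ⟨⟨⟨hw, h2⟩, h3⟩, ?_⟩
      rintro ⟨⟨g0, g1⟩, g2⟩
      exact h4 _ rfl ⟨g1, g2⟩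
  · constructor
    · rintro ⟨⟨⟨h1, h2⟩, h3⟩, h4⟩
      exact ⟨h2, h3, fun q hq => absurd hq (by simp)⟩
    · rintro ⟨h2, h3, _⟩
      refine ⟨⟨⟨hw, h2⟩, h3⟩, ?_⟩
      rintro ⟨⟨g0, g1⟩, g2⟩
      exact h (fun y hy => (g0 y hy).1)

theorem st2_nil (m n : ℕ) : st2 m n [] = (0, some 0) := by
  unfold st2
  rw [if_pos (by simp)]
  rfl

theorem hrange2 {m n : ℕ} (hm : 4 ≤ m) (hn : 4 ≤ n) (w : Wd) (hw : ∀ y ∈ w, y ≠ d) :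
    st2 m n w ∈ F2 m n := by
  rcases eq_or_ne w [] with rfl | hne
  · rw [st2_nil]; exact Finset.mem_insert_self _ _
  · apply Finset.mem_insert_of_mem
    rw [Finset.mem_product]
    constructor
    · show evM m 0 w ∈ Finset.Ico 1 m
      exact Finset.mem_Ico.2 ⟨evM_pos hw hne, by have := evM_le hm (p := 0) (by omega) w; omega⟩
    · show (if ∀ y ∈ w, y ≠ c then some (evN n 0 w) else none) ∈ _
      split_ifs with h
      · apply Finset.mem_union_left
        exact Finset.mem_image.2 ⟨evN n 0 w, Finset.mem_Ico.2
          ⟨evN_pos h hne, by have := evN_le hn (q := 0) (by omega) w; omega⟩, rfl⟩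
      · exact Finset.mem_union_right _ (by simp)

theorem memF2 {m n : ℕ} {s : ℕ × Option ℕ} (hs : s ∈ F2 m n) :
    s = (0, some 0) ∨
      ((1 ≤ s.1 ∧ s.1 ≤ m - 1) ∧
       (s.2 = none ∨ ∃ q, 1 ≤ q ∧ q ≤ n - 1 ∧ s.2 = some q)) := by
  rcases Finset.mem_insert.1 hs with h | h
  · exact Or.inl h
  · right
    rw [Finset.mem_product] at h
    obtain ⟨h1, h2⟩ := h
    rw [Finset.mem_Ico] at h1
    refine ⟨⟨h1.1, by omega⟩, ?_⟩
    rcases Finset.mem_union.1 h2 with h | h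
    · obtain ⟨q, hq, hqs⟩ := Finset.mem_image.1 h
      rw [Finset.mem_Ico] at hq
      exact Or.inr ⟨q, hq.1, by omega, hqs.symm⟩
    · simp at h
      exact Or.inl h

theorem hreach2 {m n : ℕ} (hm : 4 ≤ m) (hn : 4 ≤ n) {s : ℕ × Option ℕ}
    (hs : s ∈ F2 m n) : ∃ w : Wd, (∀ y ∈ w, y ≠ d) ∧ st2 m n w = s := by
  rcases memF2 hs with rfl | ⟨⟨hp1, hp2⟩, h2⟩
  · exact ⟨[], by simp, st2_nil m n⟩
  obtain ⟨p, β⟩ := s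
  simp only at hp1 hp2 h2
  rcases h2 with rfl | ⟨q, hq1, hq2, rfl⟩
  · refine ⟨rep c p, noD_c p, ?_⟩
    unfold st2
    rw [if_neg (notC_c hp1), show evM m 0 (rep c p) = 0 + p from evM_rep_c hm (by omega)]
    rw [Nat.zero_add]
  · obtain ⟨w, hab, hM, hN⟩ := reach_live hm hn hp1 hp2 hq1 hq2
    refine ⟨w, noD_of_ab hab, ?_⟩
    unfold st2
    rw [if_pos (noC_of_ab hab), hM, hN]

theorem inj2 {m n : ℕ} (hm : 4 ≤ m) (hn : 4 ≤ n) : Set.InjOn (Q2 m n) ↑(F2 m n) := by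
  -- membership characterization for words containing `c` (but no `d`)
  have hc : ∀ s x, (∀ y ∈ x, y ≠ d) → (¬ ∀ y ∈ x, y ≠ c) →
      (x ∈ Q2 m n s ↔ evM m s.1 x = m - 1) := by
    intro s x hxD hxC
    unfold Q2
    simp only [Set.mem_setOf_eq]
    constructor
    · rintro ⟨_, h2, _⟩; exact h2
    · intro h2
      exact ⟨hxD, h2, fun q hq ⟨g1, g2⟩ => hxC (fun y hy => (g1 y hy).1)⟩
  have hzero : ∀ u v : ℕ × Option ℕ, u ∈ F2 m n → v ∈ F2 m n → Q2 m n u = Q2 m n v →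
      u = (0, some 0) → v = (0, some 0) := by
    intro u v hu hv huv hu0
    rcases memF2 hv with h | ⟨⟨hp1, hp2⟩, h2⟩
    · exact h
    exfalso
    have hx : (rep a (m - 2) ++ [c]) ∈ Q2 m n u := by
      rw [hc u _ (noD_ac _) (notC_ac _), hu0]
      exact M0hit hm
    rw [huv, hc v _ (noD_ac _) (notC_ac _)] at hx
    rcases eq_or_ne v.1 (m - 1) with hvm | hvm
    · have hy : (rep c (m - 2)) ∈ Q2 m n v := by
        rw [hc v _ (noD_c _) (notC_c (by omega)), hvm]
        exact Mtophit hm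
      rw [← huv, hc u _ (noD_c _) (notC_c (by omega)), hu0] at hy
      exact Mtopmiss hm hy
    · exact M0miss hm hp1 (by omega) hx
  intro u hu v hv huv
  rcases memF2 hu with hu0 | ⟨⟨hp1, hp2⟩, hu2⟩
  · rw [hu0, hzero u v hu hv huv hu0]
  rcases memF2 hv with hv0 | ⟨⟨hq1, hq2⟩, hv2⟩
  · rw [hv0, hzero v u hv hu huv.symm hv0]
  have hfst : u.1 = v.1 := by
    by_contra hne
    have hx : (rep a (2 * m - 3 - u.1) ++ [c]) ∈ Q2 m n u := by
      rw [hc u _ (noD_ac _) (notC_ac _)]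
      exact Mhit hm hp1 hp2
    rw [huv, hc v _ (noD_ac _) (notC_ac _)] at hx
    exact Mmiss hm hp1 hp2 hq1 hq2 (fun h => hne h.symm) hx
  have hsnd : u.2 = v.2 := by
    -- a live `{a,b}`-word hitting `(m-1, n-1)` from `(u.1, q)` distinguishes the `N`-sides
    have key : ∀ s t : ℕ × Option ℕ, s.1 = u.1 → t.1 = u.1 →
        (t.2 = none ∨ ∃ q', 1 ≤ q' ∧ q' ≤ n - 1 ∧ t.2 = some q') →
        Q2 m n s = Q2 m n t → ∀ q, 1 ≤ q → q ≤ n - 1 → s.2 = some q → t.2 = some q := by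
      intro s t hs1 ht1 ht2 hst q hq1' hq2' hsq
      obtain ⟨x, hab, hxM, hxN, _⟩ := final_word hm hn (p := u.1) (q := q) hp1 hp2 hq1' hq2'
      have hxs : x ∉ Q2 m n s := by
        unfold Q2
        simp only [Set.mem_setOf_eq]
        rintro ⟨_, _, h3⟩
        exact h3 q (by rw [hsq]) ⟨noCD_of_ab hab, hxN⟩
      rw [hst] at hxs
      by_contra hne
      apply hxs
      unfold Q2
      simp only [Set.mem_setOf_eq]
      refine ⟨noD_of_ab hab, by rw [ht1]; exact hxM, ?_⟩
      rintro q' hq' ⟨g1, g2⟩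
      rcases ht2 with h | ⟨q'', hq1'', hq2'', hqs''⟩
      · rw [h] at hq'; cases hq'
      · rw [hqs''] at hq'
        obtain rfl := Option.some_inj.1 hq'
        have : q'' = q := evN_injOn hn hab hq1'' hq2'' hq1' hq2' (by rw [g2, hxN])
        exact hne (by rw [hqs'', this, ← hsq])
    rcases hu2 with hu2 | ⟨q, hq1', hq2', hqs⟩
    · rcases hv2 with hv2 | ⟨q', hq1'', hq2'', hqs'⟩
      · rw [hu2, hv2]
      · have := key v u hfst.symm rfl (Or.inl hu2) huv.symm q' hq1'' hq2'' hqs'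
        rw [hu2] at this
        cases this
    · have := key u v rfl hfst.symm hv2 huv q hq1' hq2' hqs
      rw [hqs, this]
  exact Prod.ext hfst hsnd

theorem cardF2 {m n : ℕ} (hm : 4 ≤ m) (hn : 4 ≤ n) : (F2 m n).card = m * n - n + 1 := by
  unfold F2
  rw [Finset.card_insert_of_notMem, Finset.card_product]
  · rw [Finset.card_union_of_disjoint (by simp), Finset.card_image_of_injective _
      (Option.some_injective ℕ), Nat.card_Ico, Nat.card_Ico, Finset.card_singleton]
    have h1 : (m - 1) * n = m * n - n := by
      rw [Nat.sub_mul, one_mul]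
    have h2 : n ≤ m * n := Nat.le_mul_of_pos_left n (by omega)
    have h3 : (n - 1 + 1) = n := by omega
    rw [h3, h1]
  · rw [Finset.mem_product]
    rintro ⟨h1, h2⟩
    rw [Finset.mem_Ico] at h1
    omega

end S19
namespace S19
open ABCD

/-! ### part (iii): `LmAB ∩ LnBA` over `{a,b}` -/

def st3 (m n : ℕ) (w : Wd) : ℕ × ℕ := (evM m 0 w, evN n 0 w)

def Q3 (m n : ℕ) (s : ℕ × ℕ) : Set Wd :=
  {x | (∀ y ∈ x, y ≠ c ∧ y ≠ d) ∧ evM m s.1 x = m - 1 ∧ evN n s.2 x = n - 1}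

def F3 (m n : ℕ) : Finset (ℕ × ℕ) :=
  insert (0, 0) ((Finset.Ico 1 m) ×ˢ (Finset.Ico 1 n))

theorem hquot3 {m n : ℕ} (w : Wd) (hw : ∀ y ∈ w, y ≠ c ∧ y ≠ d) :
    leftQuot (LmAB m ∩ LnBA n) w = Q3 m n (st3 m n w) := by
  ext x
  show w ++ x ∈ LmAB m ∧ w ++ x ∈ LnBA n ↔ _
  rw [mem_LmAB, mem_LnBA,
    show (∀ y ∈ w ++ x, y ≠ c ∧ y ≠ d) ↔ _ from List.forall_mem_append,
    evM_append, evN_append]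
  unfold Q3 st3
  simp only [Set.mem_setOf_eq]
  constructor
  · rintro ⟨⟨⟨h1, h2⟩, h3⟩, ⟨_, h4⟩⟩
    exact ⟨h2, h3, h4⟩
  · rintro ⟨h2, h3, h4⟩
    exact ⟨⟨⟨hw, h2⟩, h3⟩, ⟨⟨hw, h2⟩, h4⟩⟩

theorem hrange3 {m n : ℕ} (hm : 4 ≤ m) (hn : 4 ≤ n) (w : Wd)
    (hw : ∀ y ∈ w, y ≠ c ∧ y ≠ d) : st3 m n w ∈ F3 m n := by
  rcases eq_or_ne w [] with rfl | hne
  · exact Finset.mem_insert_self _ _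
  · apply Finset.mem_insert_of_mem
    refine Finset.mem_product.2 ⟨?_, ?_⟩
    · show evM m 0 w ∈ Finset.Ico 1 m
      exact Finset.mem_Ico.2 ⟨evM_pos (fun y hy => (hw y hy).2) hne,
        by have := evM_le hm (p := 0) (by omega) w; omega⟩
    · show evN n 0 w ∈ Finset.Ico 1 n
      exact Finset.mem_Ico.2 ⟨evN_pos (fun y hy => (hw y hy).1) hne,
        by have := evN_le hn (q := 0) (by omega) w; omega⟩

theorem memF3 {m n : ℕ} {s : ℕ × ℕ} (hs : s ∈ F3 m n) :
    s = (0, 0) ∨ ((1 ≤ s.1 ∧ s.1 ≤ m - 1) ∧ (1 ≤ s.2 ∧ s.2 ≤ n - 1)) := by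
  rcases Finset.mem_insert.1 hs with h | h
  · exact Or.inl h
  · right
    rw [Finset.mem_product, Finset.mem_Ico, Finset.mem_Ico] at h
    omega

theorem hreach3 {m n : ℕ} (hm : 4 ≤ m) (hn : 4 ≤ n) {s : ℕ × ℕ}
    (hs : s ∈ F3 m n) : ∃ w : Wd, (∀ y ∈ w, y ≠ c ∧ y ≠ d) ∧ st3 m n w = s := by
  rcases memF3 hs with rfl | ⟨⟨hp1, hp2⟩, ⟨hq1, hq2⟩⟩
  · exact ⟨[], by simp, rfl⟩
  · obtain ⟨w, hab, hM, hN⟩ := reach_live hm hn hp1 hp2 hq1 hq2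
    refine ⟨w, noCD_of_ab hab, ?_⟩
    unfold st3
    rw [hM, hN]

theorem inj3 {m n : ℕ} (hm : 4 ≤ m) (hn : 4 ≤ n) : Set.InjOn (Q3 m n) ↑(F3 m n) := by
  have hzero : ∀ u v : ℕ × ℕ, u ∈ F3 m n → v ∈ F3 m n → Q3 m n u = Q3 m n v →
      u = (0, 0) → v = (0, 0) := by
    intro u v hu hv huv hu0
    rcases memF3 hv with h | ⟨⟨hp1, hp2⟩, ⟨hq1, hq2⟩⟩
    · exact h
    exfalso
    obtain ⟨x, hab, hxM, hxN, hx0⟩ := final_word hm hn hp1 hp2 hq1 hq2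
    have hx : x ∈ Q3 m n v := ⟨noCD_of_ab hab, hxM, hxN⟩
    rw [← huv] at hx
    obtain ⟨_, _, h4⟩ := hx
    rw [hu0] at h4
    exact hx0 h4
  intro u hu v hv huv
  rcases memF3 hu with hu0 | ⟨⟨hp1, hp2⟩, ⟨hq1, hq2⟩⟩
  · rw [hu0, hzero u v hu hv huv hu0]
  rcases memF3 hv with hv0 | ⟨⟨hp1', hp2'⟩, ⟨hq1', hq2'⟩⟩
  · rw [hv0, hzero v u hv hu huv.symm hv0]
  obtain ⟨x, hab, hxM, hxN, _⟩ := final_word hm hn hp1 hp2 hq1 hq2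
  have hx : x ∈ Q3 m n u := ⟨noCD_of_ab hab, hxM, hxN⟩
  rw [huv] at hx
  obtain ⟨_, h3, h4⟩ := hx
  have e1 : u.1 = v.1 := evM_injOn hm hab hp1 hp2 hp1' hp2' (by rw [hxM, h3])
  have e2 : u.2 = v.2 := evN_injOn hn hab hq1 hq2 hq1' hq2' (by rw [hxN, h4])
  exact Prod.ext e1 e2

theorem cardF3 {m n : ℕ} (hm : 4 ≤ m) (hn : 4 ≤ n) :
    (F3 m n).card = m * n - (m + n - 2) := by
  unfold F3
  rw [Finset.card_insert_of_notMem, Finset.card_product, Nat.card_Ico, Nat.card_Ico]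
  · obtain ⟨m', rfl⟩ : ∃ m', m = m' + 1 := ⟨m - 1, by omega⟩
    obtain ⟨n', rfl⟩ : ∃ n', n = n' + 1 := ⟨n - 1, by omega⟩
    have h1 : (m' + 1) * (n' + 1) = m' * n' + m' + n' + 1 := by ring
    rw [h1]
    simp only [Nat.add_sub_cancel]
    omega
  · rw [Finset.mem_product]
    rintro ⟨h1, h2⟩
    rw [Finset.mem_Ico] at h1
    omega

end S19

/-- Unrestricted boolean operations on non-returning languages, for `m, n ≥ 4`:
(i) for any non-returning `L'` of complexity `m` over `Σ'` and `L` of complexity `n`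
over `Σ`, the union and the symmetric difference, regarded as languages over `Σ' ∪ Σ`,
have state complexity at most `mn + 1`, and this bound is attained by `L'_m(a,b,c)` and
`L_n(b,a,d)` (the operations taken over `{a,b,c,d}`);
(ii) `κ(L'_m(a,b,c) ∖ L_n(b,a)) = mn - n + 1`, the difference taken over `{a,b,c}`;
(iii) `κ(L'_m(a,b) ∩ L_n(b,a)) = mn - (m + n - 2)`, the intersection taken over `{a,b}`. -/
theorem stmt19 (m n : ℕ) (hm : 4 ≤ m) (hn : 4 ≤ n) :
    (∀ (γ : Type) (A B : Set γ) (L' L : Set (List γ)),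
      (∀ w ∈ L', ∀ x ∈ w, x ∈ A) → (∀ w ∈ L, ∀ x ∈ w, x ∈ B) →
      NonReturningOn A L' → NonReturningOn B L →
      Nat.card (quotientsOn A L') = m → Nat.card (quotientsOn B L) = n →
      Nat.card (quotientsOn (A ∪ B) (L' ∪ L)) ≤ m * n + 1 ∧
      Nat.card (quotientsOn (A ∪ B) (symmDiff L' L)) ≤ m * n + 1) ∧
    Nat.card (quotientsOn Set.univ (LmABC m ∪ LnBAD n)) = m * n + 1 ∧
    Nat.card (quotientsOn Set.univ (symmDiff (LmABC m) (LnBAD n))) = m * n + 1 ∧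
    Nat.card (quotientsOn {x : ABCD | x ≠ ABCD.d} (LmABC m \ LnBA n)) = m * n - n + 1 ∧
    Nat.card (quotientsOn {x : ABCD | x ≠ ABCD.c ∧ x ≠ ABCD.d} (LmAB m ∩ LnBA n))
      = m * n - (m + n - 2) := by
  refine ⟨?_, ?_, ?_, ?_, ?_⟩
  · intro γ A B L' L hA hB hNR' hNR hm' hn'
    constructor
    · exact S19.upper_general hm hn hA hB hNR' hNR hm' hn' (· ∪ ·)
        (fun w => S19.leftQuot_union L' L w)
    · exact S19.upper_general hm hn hA hB hNR' hNR hm' hn' symmDiff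
        (fun w => S19.leftQuot_symmDiff L' L w)
  · exact (S19.card_quotients Set.univ _ (S19.st1 m n) (S19.QU m n) (S19.F1 m n)
      (fun w _ => S19.hquot_union m n w)
      (fun w _ => S19.hrange1 hm hn w)
      (fun s hs => (S19.hreach1 hm hn hs).imp (fun w h => ⟨fun x _ => trivial, h⟩))
      (S19.inj1 hm hn (S19.QU m n) (fun s x h1 h2 => S19.QU_c_char s x h1 h2)
        (fun s x h1 h2 => S19.QU_d_char s x h1 h2))).trans (S19.cardF1 hm hn)
  · exact (S19.card_quotients Set.univ _ (S19.st1 m n) (S19.QS m n) (S19.F1 m n)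
      (fun w _ => S19.hquot_symmdiff m n w)
      (fun w _ => S19.hrange1 hm hn w)
      (fun s hs => (S19.hreach1 hm hn hs).imp (fun w h => ⟨fun x _ => trivial, h⟩))
      (S19.inj1 hm hn (S19.QS m n) (fun s x h1 h2 => S19.QS_c_char s x h1 h2)
        (fun s x h1 h2 => S19.QS_d_char s x h1 h2))).trans (S19.cardF1 hm hn)
  · exact (S19.card_quotients {x : ABCD | x ≠ ABCD.d} _ (S19.st2 m n) (S19.Q2 m n)
      (S19.F2 m n)
      (fun w hw => S19.hquot2 w hw)
      (fun w hw => S19.hrange2 hm hn w hw)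
      (fun s hs => S19.hreach2 hm hn hs)
      (S19.inj2 hm hn)).trans (S19.cardF2 hm hn)
  · exact (S19.card_quotients {x : ABCD | x ≠ ABCD.c ∧ x ≠ ABCD.d} _ (S19.st3 m n)
      (S19.Q3 m n) (S19.F3 m n)
      (fun w hw => S19.hquot3 w hw)
      (fun w hw => S19.hrange3 hm hn w hw)
      (fun s hs => S19.hreach3 hm hn hs)
      (S19.inj3 hm hn)).trans (S19.cardF3 hm hn)
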